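/- The set ℤ[1/2] of dyadic rationals, embedded diagonally as Λ = {(g, g) : g ∈ ℤ[1/2]} in ℝ × ℚ_2, is a discrete and cocompact subgroup (uniform lattice) of ℝ × ℚ_2. -/

import Mathlib

open Pointwise

/-- The diagonal embedding of the dyadic rationals `ℤ[1/2]` into `ℝ × ℚ_2`. -/
def dyadicLattice : Set (ℝ × ℚ_[2]) :=
  {x | ∃ q : ℚ, (∃ m : ℤ, ∃ n : ℕ, q = (m : ℚ) / 2 ^ n) ∧ x = ((q : ℝ), (q : ℚ_[2]))}

/-- A dyadic rational which is a 2-adic integer is an integer. -/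
lemma dyadic_int {q : ℚ} (m : ℤ) (n : ℕ) (hq : q = (m : ℚ) / 2 ^ n)
    (h1 : ‖(q : ℚ_[2])‖ ≤ 1) : ∃ k : ℤ, q = k := by
  have hm : (m : ℚ) = 2 ^ n * q := by rw [hq]; field_simp
  have hnorm : ‖((m : ℚ) : ℚ_[2])‖ ≤ (2 : ℝ) ^ (-(n : ℤ)) := by
    have : ((m : ℚ) : ℚ_[2]) = (2 : ℚ_[2]) ^ n * (q : ℚ_[2]) := by
      rw [hm]; push_cast; ring
    rw [this, norm_mul]
    have h2 : ‖(2 : ℚ_[2]) ^ n‖ = (2 : ℝ) ^ (-(n : ℤ)) := by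
      have := Padic.norm_p_pow (p := 2) n
      simpa using this
    calc ‖(2 : ℚ_[2]) ^ n‖ * ‖(q : ℚ_[2])‖ ≤ ‖(2 : ℚ_[2]) ^ n‖ * 1 := by
          exact mul_le_mul_of_nonneg_left h1 (norm_nonneg _)
      _ = (2 : ℝ) ^ (-(n : ℤ)) := by rw [h2, mul_one]
  have hdvd : ((2 : ℤ) ^ n) ∣ m := by
    have := (Padic.norm_int_le_pow_iff_dvd (p := 2) m n).mp (by
      simpa using hnorm)
    exact_mod_cast this
  obtain ⟨k, hk⟩ := hdvd
  refine ⟨k, ?_⟩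
  rw [hq, hk]
  push_cast
  field_simp

/-- Dyadic rational small in both places is zero. -/
lemma dyadic_zero {q : ℚ} (m : ℤ) (n : ℕ) (hq : q = (m : ℚ) / 2 ^ n)
    (h1 : ‖(q : ℚ_[2])‖ ≤ 1) (h2 : |(q : ℝ)| < 1) : q = 0 := by
  obtain ⟨k, hk⟩ := dyadic_int m n hq h1
  subst hk
  have : |(k : ℝ)| < 1 := by exact_mod_cast h2
  have hk0 : k = 0 := by
    have h := abs_lt.mp this
    have h1' : (-1 : ℤ) < k := by exact_mod_cast h.1
    have h2' : k < 1 := by exact_mod_cast h.2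
    omega
  simp [hk0]

/-- every `y : ℚ_[2]` is within distance 1 of a dyadic rational. -/
lemma exists_dyadic_near (y : ℚ_[2]) :
    ∃ m : ℤ, ∃ n : ℕ, ‖y - (((m : ℚ) / 2 ^ n : ℚ) : ℚ_[2])‖ ≤ 1 := by
  obtain ⟨N, hN⟩ := exists_nat_gt ‖y‖
  have hN2 : ‖y‖ ≤ (2 : ℝ) ^ N := by
    calc ‖y‖ ≤ N := hN.le
      _ ≤ (2 : ℝ) ^ N := by exact_mod_cast (Nat.lt_two_pow_self (n := N)).le
  set n := N
  have h2n : ‖(2 : ℚ_[2]) ^ n‖ = (2 : ℝ) ^ (-(n : ℤ)) := by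
    simpa using Padic.norm_p_pow (p := 2) n
  have hz : ‖(2 : ℚ_[2]) ^ n * y‖ ≤ 1 := by
    rw [norm_mul, h2n]
    calc (2 : ℝ) ^ (-(n : ℤ)) * ‖y‖ ≤ (2 : ℝ) ^ (-(n : ℤ)) * (2 : ℝ) ^ n := by
          exact mul_le_mul_of_nonneg_left hN2 (by positivity)
      _ = 1 := by rw [← zpow_natCast (2:ℝ) n, ← zpow_add₀ (by norm_num : (2:ℝ) ≠ 0)]; simp
  set z : ℤ_[2] := ⟨(2 : ℚ_[2]) ^ n * y, hz⟩ with hzdef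
  set m : ℕ := z.appr n with hmdef
  have happr : ‖z - (m : ℤ_[2])‖ ≤ (2 : ℝ) ^ (-(n : ℤ)) := by
    have := (PadicInt.norm_le_pow_iff_mem_span_pow (z - (m : ℤ_[2])) n).mpr (z.appr_spec n)
    simpa using this
  refine ⟨(m : ℤ), n, ?_⟩
  push_cast
  rw [show y - (m : ℚ_[2]) / (2:ℚ_[2]) ^ n = ((2 : ℚ_[2]) ^ n * y - (m : ℚ_[2])) / (2 : ℚ_[2]) ^ n
    from by field_simp, norm_div, h2n]
  have hcoe : ‖(2 : ℚ_[2]) ^ n * y - (m : ℚ_[2])‖ = ‖z - (m : ℤ_[2])‖ := by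
    rw [PadicInt.norm_def]
    push_cast [hzdef]
    norm_num
    rfl
  rw [hcoe]
  rw [div_le_one (by positivity)]
  simpa using happr

theorem dyadicLattice_is_uniform_lattice :
    ((0 : ℝ × ℚ_[2]) ∈ dyadicLattice) ∧
    (∀ x ∈ dyadicLattice, ∀ y ∈ dyadicLattice, x + y ∈ dyadicLattice) ∧
    (∀ x ∈ dyadicLattice, -x ∈ dyadicLattice) ∧
    DiscreteTopology dyadicLattice ∧
    ∃ K : Set (ℝ × ℚ_[2]), IsCompact K ∧ K + dyadicLattice = Set.univ := by
  refine ⟨⟨0, ⟨0, 0, by norm_num⟩, by norm_num [Prod.ext_iff]⟩, ?_, ?_, ?_, ?_⟩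
  · rintro x ⟨q, ⟨m, n, hmn⟩, hx⟩ y ⟨r, ⟨m', n', hmn'⟩, hy⟩
    refine ⟨q + r, ⟨m * 2 ^ n' + m' * 2 ^ n, n + n', ?_⟩, ?_⟩
    · rw [hmn, hmn', div_add_div _ _ (pow_ne_zero _ (by norm_num : (2:ℚ) ≠ 0))
        (pow_ne_zero _ (by norm_num : (2:ℚ) ≠ 0))]
      push_cast
      rw [pow_add]
      ring
    · rw [hx, hy]; simp [Prod.ext_iff]
  · rintro x ⟨q, ⟨m, n, hmn⟩, hx⟩
    refine ⟨-q, ⟨-m, n, by rw [hmn]; push_cast; ring⟩, ?_⟩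
    rw [hx]; simp [Prod.ext_iff]
  · refine discreteTopology_iff_isOpen_singleton.mpr ?_
    rintro ⟨x, q, ⟨m, n, hmn⟩, hx⟩
    rw [isOpen_induced_iff]
    refine ⟨{y : ℝ × ℚ_[2] | |y.1 - x.1| < 1 ∧ ‖y.2 - x.2‖ < 2}, ?_, ?_⟩
    · apply IsOpen.inter
      · exact isOpen_lt (continuous_fst.sub continuous_const).abs continuous_const
      · exact isOpen_lt (continuous_snd.sub continuous_const).norm continuous_const
    · ext ⟨y, r, ⟨m', n', hmn'⟩, hy⟩
      simp only [Set.mem_preimage, Set.mem_setOf_eq, Set.mem_singleton_iff, Subtype.mk.injEq, Subtype.ext_iff]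
      constructor
      · rintro ⟨hre, hpa⟩
        rw [hx, hy] at *
        have hd : r - q = ((m' * 2 ^ n - m * 2 ^ n' : ℤ) : ℚ) / 2 ^ (n + n') := by
          rw [hmn, hmn']; push_cast; field_simp; ring
        have h2 : ‖((r - q : ℚ) : ℚ_[2])‖ ≤ 1 := by
          have := (Padic.norm_lt_pow_iff_norm_le_pow_sub_one
            (((r - q : ℚ)) : ℚ_[2]) 1).mp (by push_cast; simpa using hpa)
          simpa using this
        have h1 : |((r - q : ℚ) : ℝ)| < 1 := by push_cast; simpa using hre
        have := dyadic_zero _ _ hd h2 h1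
        have hrq : r = q := by linarith [sub_eq_zero.mp this]
        rw [hrq]
      · rintro h
        rw [hx, hy] at *
        have : r = q := by
          have h1 := congrArg Prod.fst h
          simp at h1
          exact_mod_cast h1
        simp [this]
  · refine ⟨Set.Icc (0 : ℝ) 1 ×ˢ Metric.closedBall (0 : ℚ_[2]) 1,
      isCompact_Icc.prod (isCompact_closedBall _ _), ?_⟩
    rw [Set.eq_univ_iff_forall]
    rintro ⟨x, y⟩
    obtain ⟨m, n, hmn⟩ := exists_dyadic_near y
    set q : ℚ := (m : ℚ) / 2 ^ n with hq
    set k : ℤ := ⌊x - (q : ℝ)⌋ with hk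
    set q' : ℚ := q + k with hq'
    rw [Set.mem_add]
    refine ⟨(x - (q' : ℝ), y - (q' : ℚ_[2])), ?_, ((q' : ℝ), (q' : ℚ_[2])),
      ⟨q', ⟨m + k * 2 ^ n, n, by rw [hq', hq]; push_cast; field_simp⟩, rfl⟩, ?_⟩
    · constructor
      · have : x - (q' : ℝ) = Int.fract (x - (q : ℝ)) := by
          rw [Int.fract, hq']; push_cast; ring
        rw [this]
        exact ⟨Int.fract_nonneg _, (Int.fract_lt_one _).le⟩
      · rw [Metric.mem_closedBall, dist_zero_right]
        have : y - (q' : ℚ_[2]) = (y - (q : ℚ_[2])) + (-(k : ℚ_[2])) := by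
          rw [hq']; push_cast; ring
        rw [this]
        refine le_trans (Padic.nonarchimedean _ _) (max_le ?_ ?_)
        · exact hmn
        · rw [norm_neg]; exact Padic.norm_int_le_one _
    · simp [Prod.ext_iff]
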